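/- Let $\mathcal{L}$ be quasi-positive, irreducible, with zero column sums, with normalized positive null vector $\alpha$, and let $\beta, r\in\mathbb{R}^n_{>0}$, $l>0$, $U\in\mathbb{R}^n_{>0}$. If $Z\in\mathbb{R}^n$ satisfies $\tfrac{1}{l}\mathcal{L}Z + \beta\circ(r - Z)\circ U = 0$ and $Z\gg 0$, then $\frac{\min_j r_j}{\max_j\alpha_j}\,\alpha_i \le Z_i \le \frac{\max_j r_j}{\min_j\alpha_j}\,\alpha_i$ for all $i$. -/

import Mathlib

/-- A square matrix is irreducible if for every nonempty proper coordinate subset `s`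
there is a nonzero entry `L i j` with `j ∈ s` and `i ∉ s`. -/
def Matrix.IsIrreducible' {n : ℕ} (L : Matrix (Fin n) (Fin n) ℝ) : Prop :=
  ∀ s : Finset (Fin n), s.Nonempty → s ≠ Finset.univ →
    ∃ i ∉ s, ∃ j ∈ s, L i j ≠ 0

/-- A positive solution `Z` of `(1/l) L Z + β∘(r - Z)∘U = 0` satisfies
`(min_j r_j / max_j α_j) α_i ≤ Z_i ≤ (max_j r_j / min_j α_j) α_i` for all `i`. -/
theorem Z_comparison_bounds {n : ℕ} (hn : 0 < n)
    (L : Matrix (Fin n) (Fin n) ℝ)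
    (hquasi : ∀ i j, i ≠ j → 0 ≤ L i j)
    (hirr : L.IsIrreducible')
    (hcol : ∀ j, ∑ i, L i j = 0)
    (α : Fin n → ℝ) (hα0 : L.mulVec α = 0) (hαpos : ∀ j, 0 < α j)
    (hαsum : ∑ j, α j = 1)
    (l : ℝ) (hl : 0 < l)
    (β r U Z : Fin n → ℝ)
    (hβ : ∀ j, 0 < β j) (hr : ∀ j, 0 < r j) (hU : ∀ j, 0 < U j)
    (hZpos : ∀ j, 0 < Z j)
    (heq : ∀ i, (1 / l) * (∑ j, L i j * Z j) + β i * (r i - Z i) * U i = 0) :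
    ∀ i,
      (Finset.univ.inf' ⟨⟨0, hn⟩, Finset.mem_univ _⟩ r /
        Finset.univ.sup' ⟨⟨0, hn⟩, Finset.mem_univ _⟩ α) * α i ≤ Z i ∧
      Z i ≤ (Finset.univ.sup' ⟨⟨0, hn⟩, Finset.mem_univ _⟩ r /
        Finset.univ.inf' ⟨⟨0, hn⟩, Finset.mem_univ _⟩ α) * α i := by
  have hne : (Finset.univ : Finset (Fin n)).Nonempty := ⟨⟨0, hn⟩, Finset.mem_univ _⟩
  set q : Fin n → ℝ := fun j => Z j / α j with hqdef
  have hrow : ∀ i, ∑ j, L i j * α j = 0 := by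
    intro i
    simpa [Matrix.mulVec, dotProduct] using congrFun hα0 i
  -- rewrite the L-sum using the null vector
  have hshift : ∀ i : Fin n, ∀ c : ℝ,
      ∑ j, L i j * Z j = ∑ j, L i j * (Z j - c * α j) := by
    intro i c
    have h1 : ∑ j, L i j * (Z j - c * α j)
        = (∑ j, L i j * Z j) - c * (∑ j, L i j * α j) := by
      rw [Finset.mul_sum, ← Finset.sum_sub_distrib]
      exact Finset.sum_congr rfl fun j _ => by ring
    rw [h1, hrow i, mul_zero, sub_zero]
  -- lower bound: minimizer of q
  obtain ⟨i0, -, hi0⟩ := Finset.exists_mem_eq_inf' hne q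
  obtain ⟨i1, -, hi1⟩ := Finset.exists_mem_eq_sup' hne q
  have hqmin : ∀ j, q i0 ≤ q j := fun j => hi0 ▸ Finset.inf'_le q (Finset.mem_univ j)
  have hqmax : ∀ j, q j ≤ q i1 := fun j => hi1 ▸ Finset.le_sup' q (Finset.mem_univ j)
  have hself : ∀ j, q j * α j = Z j := fun j => div_mul_cancel₀ _ (hαpos j).ne'
  have hS0 : 0 ≤ ∑ j, L i0 j * Z j := by
    rw [hshift i0 (q i0)]
    refine Finset.sum_nonneg fun j _ => ?_
    by_cases h : j = i0
    · subst h; rw [hself j, sub_self, mul_zero]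
    · refine mul_nonneg (hquasi i0 j fun e => h e.symm) (sub_nonneg.mpr ?_)
      have := hqmin j
      calc q i0 * α j ≤ q j * α j := by
            exact mul_le_mul_of_nonneg_right this (hαpos j).le
        _ = Z j := hself j
  have hS1 : ∑ j, L i1 j * Z j ≤ 0 := by
    rw [hshift i1 (q i1)]
    refine Finset.sum_nonpos fun j _ => ?_
    by_cases h : j = i1
    · subst h; rw [hself j, sub_self, mul_zero]
    · refine mul_nonpos_of_nonneg_of_nonpos (hquasi i1 j fun e => h e.symm)
        (sub_nonpos.mpr ?_)
      calc Z j = q j * α j := (hself j).symm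
        _ ≤ q i1 * α j := mul_le_mul_of_nonneg_right (hqmax j) (hαpos j).le
  have hr0 : r i0 ≤ Z i0 := by
    have h := heq i0
    nlinarith [hS0, one_div_pos.mpr hl, hβ i0, hU i0, mul_pos (hβ i0) (hU i0)]
  have hr1 : Z i1 ≤ r i1 := by
    have h := heq i1
    nlinarith [hS1, one_div_pos.mpr hl, hβ i1, hU i1, mul_pos (hβ i1) (hU i1)]
  intro i
  constructor
  · have hdiv : Finset.univ.inf' hne r / Finset.univ.sup' hne α ≤ q i := by
      refine le_trans ?_ (hqmin i)
      have h1 : Finset.univ.inf' hne r ≤ Z i0 :=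
        le_trans (Finset.inf'_le r (Finset.mem_univ i0)) hr0
      have h2 : α i0 ≤ Finset.univ.sup' hne α := Finset.le_sup' α (Finset.mem_univ i0)
      exact div_le_div₀ (hZpos i0).le h1 (hαpos i0) h2
    calc (Finset.univ.inf' hne r / Finset.univ.sup' hne α) * α i
        ≤ q i * α i := mul_le_mul_of_nonneg_right hdiv (hαpos i).le
      _ = Z i := hself i
  · have hdiv : q i ≤ Finset.univ.sup' hne r / Finset.univ.inf' hne α := by
      refine le_trans (hqmax i) ?_
      have h1 : Z i1 ≤ Finset.univ.sup' hne r :=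
        le_trans hr1 (Finset.le_sup' r (Finset.mem_univ i1))
      have h2 : Finset.univ.inf' hne α ≤ α i1 := Finset.inf'_le α (Finset.mem_univ i1)
      have h3 : 0 < Finset.univ.inf' hne α := by
        rw [Finset.lt_inf'_iff]; exact fun j _ => hαpos j
      exact div_le_div₀ (le_trans (hZpos i1).le h1) h1 h3 h2
    calc Z i = q i * α i := (hself i).symm
      _ ≤ (Finset.univ.sup' hne r / Finset.univ.inf' hne α) * α i :=
        mul_le_mul_of_nonneg_right hdiv (hαpos i).le
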